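/- Let R be a semilocal commutative ring with 2 invertible and S a quadratic étale R-algebra with standard involution θ. Then there exists λ ∈ S such that λ² is a unit of R, λ^θ = −λ, and {1, λ} is an R-basis of S. -/

import Mathlib

set_option maxHeartbeats 1000000

open TensorProduct

section Aux

variable {R S : Type*} [CommRing R] [CommRing S] [Algebra R S]

lemma aux_tmul_zero_iff (m : Ideal R) (s : S) :
    ((1 : R ⧸ m) ⊗ₜ[R] s : (R ⧸ m) ⊗[R] S) = 0 ↔ s ∈ m • (⊤ : Submodule R S) := by
  have key : (TensorProduct.quotTensorEquivQuotSMul S m) ((1 : R ⧸ m) ⊗ₜ[R] s)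
      = Submodule.Quotient.mk s := by
    rw [show (1 : R ⧸ m) = Ideal.Quotient.mk m 1 from rfl,
      TensorProduct.quotTensorEquivQuotSMul_mk_tmul, one_smul]
  constructor
  · intro h0
    have h1 : (TensorProduct.quotTensorEquivQuotSMul S m) ((1 : R ⧸ m) ⊗ₜ[R] s) = 0 := by
      rw [h0]; exact LinearEquiv.map_zero _
    rw [key] at h1
    exact (Submodule.Quotient.mk_eq_zero _).mp h1
  · intro hs
    apply (TensorProduct.quotTensorEquivQuotSMul S m).injective
    rw [key, map_zero]
    exact (Submodule.Quotient.mk_eq_zero _).mpr hs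

lemma aux_subsingleton (m : Ideal R) (h : ∀ s : S, s ∈ m • (⊤ : Submodule R S)) :
    Subsingleton ((R ⧸ m) ⊗[R] S) := by
  refine subsingleton_of_forall_eq 0 fun z => ?_
  induction z using TensorProduct.induction_on with
  | zero => rfl
  | tmul c s =>
      have h1 : ((1 : R ⧸ m) ⊗ₜ[R] s : (R ⧸ m) ⊗[R] S) = 0 :=
        (aux_tmul_zero_iff m s).mpr (h s)
      calc (c ⊗ₜ[R] s : (R ⧸ m) ⊗[R] S) = c • ((1 : R ⧸ m) ⊗ₜ[R] s) := by
            rw [TensorProduct.smul_tmul', smul_eq_mul, mul_one]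
      _ = 0 := by rw [h1, smul_zero]
  | add x y hx hy => rw [hx, hy, add_zero]

lemma aux_inj [Module.Finite R S] [Module.Projective R S]
    (hrank : ∀ m : Ideal R, m.IsMaximal →
      Module.finrank (R ⧸ m) ((R ⧸ m) ⊗[R] S) = 2)
    {a : R} (ha : algebraMap R S a = 0) : a = 0 := by
  classical
  obtain ⟨n, v, hv⟩ := Module.Finite.exists_fin (R := R) (M := S)
  set π : (Fin n → R) →ₗ[R] S := Fintype.linearCombination R v with hπdef
  have hπ : Function.Surjective π := by
    rw [← LinearMap.range_eq_top, hπdef, Fintype.range_linearCombination]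
    exact hv
  obtain ⟨σ, hσ⟩ := Module.projective_lifting_property π LinearMap.id hπ
  have hrepr : ∀ s : S, ∑ i, σ s i • v i = s := by
    intro s
    have h1 : π (σ s) = s := congrArg (fun f => f s) hσ
    have h2 : π (σ s) = ∑ i, σ s i • v i := Fintype.linearCombination_apply R v (σ s)
    rw [← h2, h1]
  set Φ : (Fin n → S) →ₗ[R] R :=
    ∑ i, ((LinearMap.proj i).comp σ).comp (LinearMap.proj i) with hΦdef
  have hΦ : ∀ t : Fin n → S, Φ t = ∑ i, σ (t i) i := by
    intro t
    rw [hΦdef]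
    simp [LinearMap.sum_apply]
  have hΦtop : LinearMap.range Φ = ⊤ := by
    by_contra hne
    obtain ⟨m, hm, hle⟩ := Ideal.exists_le_maximal _ hne
    have hms : ∀ s : S, s ∈ m • (⊤ : Submodule R S) := by
      intro s
      have hmem : ∀ i, σ s i ∈ m := by
        intro i
        apply hle
        refine ⟨Pi.single i s, ?_⟩
        rw [hΦ]
        rw [Finset.sum_eq_single i]
        · simp
        · intro j _ hj
          simp [Pi.single_eq_of_ne hj]
        · simp
      rw [← hrepr s]
      exact Submodule.sum_mem _ fun i _ => Submodule.smul_mem_smul (hmem i) trivial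
    haveI := aux_subsingleton m hms
    have h2 := hrank m hm
    rw [Module.finrank_zero_of_subsingleton] at h2
    omega
  have h1 : (1 : R) ∈ LinearMap.range Φ := by rw [hΦtop]; trivial
  obtain ⟨t, ht⟩ := h1
  have key : ∀ i, a * σ (t i) i = 0 := by
    intro i
    have h2 : a • t i = 0 := by
      rw [Algebra.smul_def, ha, zero_mul]
    have h3 : σ (a • t i) = a • σ (t i) := map_smul σ a (t i)
    have h4 : (a • σ (t i)) i = a * σ (t i) i := rfl
    rw [← h4, ← h3, h2, map_zero]
    rfl
  have : a * Φ t = 0 := by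
    rw [hΦ, Finset.mul_sum]
    exact Finset.sum_eq_zero fun i _ => key i
  rwa [ht, mul_one] at this

end Aux

/-- Let `R` be a semilocal commutative ring with `2` invertible and `S` a quadratic étale
`R`-algebra with standard involution `θ` (the unique `R`-involution whose fixed ring is
exactly `R`).  Then there is `lm ∈ S` with `lm²` a unit of `R`, `θ lm = -lm`, and such that
`{1, lm}` is an `R`-basis of `S`. -/
theorem stmt_3 {R S : Type*} [CommRing R] [CommRing S] [Algebra R S]
    (h2 : IsUnit (2 : R)) [Finite (MaximalSpectrum R)]
    [Module.Finite R S] [Module.Projective R S] [Algebra.FormallyUnramified R S]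
    (hrank : ∀ m : Ideal R, m.IsMaximal →
      Module.finrank (R ⧸ m) ((R ⧸ m) ⊗[R] S) = 2)
    (θ : S →ₐ[R] S) (hinvol : ∀ s, θ (θ s) = s)
    (hfix : ∀ s : S, θ s = s ↔ s ∈ (algebraMap R S).range) :
    ∃ lm : S, (∃ r : R, IsUnit r ∧ lm * lm = algebraMap R S r) ∧
      θ lm = -lm ∧ ∃ b : Module.Basis (Fin 2) R S, b 0 = 1 ∧ b 1 = lm := by
  classical
  obtain ⟨half, hhalf⟩ : ∃ half : R, 2 * half = 1 :=
    ⟨(h2.unit⁻¹ : Rˣ), by simpa using h2.unit.mul_inv⟩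
  -- decomposition into invariant (scalar) and anti-invariant parts
  have hdecomp : ∀ s : S, ∃ (a : R) (μ : S), θ μ = -μ ∧ s = algebraMap R S a + μ := by
    intro s
    have hsym : θ (s + θ s) = s + θ s := by rw [map_add, hinvol]; ring
    obtain ⟨c, hc⟩ := (hfix _).mp hsym
    refine ⟨half * c, s - algebraMap R S (half * c), ?_, by ring⟩
    have hca : c - half * c = half * c := by
      linear_combination (-c) * hhalf
    have hθs : θ s = algebraMap R S c - s := by rw [hc]; ring
    have hsub : algebraMap R S c - algebraMap R S (half * c) = algebraMap R S (half * c) := by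
      rw [← map_sub, hca]
    rw [map_sub, hθs, AlgHom.commutes]
    linear_combination hsub
  -- for each maximal ideal there is an anti-invariant element not in mS
  have hfiber : ∀ m : Ideal R, m.IsMaximal →
      ∃ μ : S, θ μ = -μ ∧ μ ∉ m • (⊤ : Submodule R S) := by
    intro m hm
    by_contra hcon
    push_neg at hcon
    have hall : ∀ μ : S, θ μ = -μ → μ ∈ m • (⊤ : Submodule R S) := hcon
    haveI := hm
    letI : Field (R ⧸ m) := Ideal.Quotient.field m
    have hspan : (⊤ : Submodule (R ⧸ m) ((R ⧸ m) ⊗[R] S)) ≤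
        Submodule.span (R ⧸ m) {(1 : (R ⧸ m) ⊗[R] S)} := by
      rintro z -
      induction z using TensorProduct.induction_on with
      | zero => exact Submodule.zero_mem _
      | tmul c s =>
          obtain ⟨a, μ, hμ, rfl⟩ := hdecomp s
          have h1 : (c ⊗ₜ[R] μ : (R ⧸ m) ⊗[R] S) = 0 := by
            have h0 := (aux_tmul_zero_iff m μ).mpr (hall μ hμ)
            calc (c ⊗ₜ[R] μ : (R ⧸ m) ⊗[R] S) = c • ((1 : R ⧸ m) ⊗ₜ[R] μ) := by
                  rw [TensorProduct.smul_tmul', smul_eq_mul, mul_one]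
            _ = 0 := by rw [h0, smul_zero]
          have h2 : (c ⊗ₜ[R] (algebraMap R S a) : (R ⧸ m) ⊗[R] S) =
              (a • c) • (1 : (R ⧸ m) ⊗[R] S) := by
            rw [Algebra.TensorProduct.one_def, TensorProduct.smul_tmul', smul_eq_mul, mul_one,
              Algebra.algebraMap_eq_smul_one, TensorProduct.tmul_smul, TensorProduct.smul_tmul']
          rw [TensorProduct.tmul_add, h1, add_zero, h2]
          exact Submodule.smul_mem _ _ (Submodule.mem_span_singleton_self _)
      | add x y hx hy => exact Submodule.add_mem _ hx hy
    have htop : Submodule.span (R ⧸ m) ({1} : Set ((R ⧸ m) ⊗[R] S)) = ⊤ :=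
      le_antisymm le_top hspan
    have hle := finrank_span_le_card (R := R ⧸ m) ({1} : Set ((R ⧸ m) ⊗[R] S))
    rw [htop] at hle
    simp only [Set.toFinset_singleton, Finset.card_singleton] at hle
    rw [finrank_top] at hle
    have h2' := hrank m hm
    omega
  -- choose a global anti-invariant element avoiding all maximal ideals (CRT)
  haveI : Fintype (MaximalSpectrum R) := Fintype.ofFinite _
  have hco : Pairwise (Function.onFun IsCoprime fun i : MaximalSpectrum R => i.asIdeal) := by
    intro i j hij
    exact (Ideal.isCoprime_iff_sup_eq).mpr (Ideal.IsMaximal.coprime_of_ne i.2 j.2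
      (fun h => hij (MaximalSpectrum.ext h)))
  have hsurj := Ideal.quotientInfToPiQuotient_surj hco
  have hex : ∀ i₀ : MaximalSpectrum R, ∃ a : R,
      ∀ j : MaximalSpectrum R, Ideal.Quotient.mk j.asIdeal a =
        if j = i₀ then 1 else 0 := by
    intro i₀
    obtain ⟨y, hy⟩ := hsurj (fun j => if j = i₀ then 1 else 0)
    obtain ⟨a, rfl⟩ := Ideal.Quotient.mk_surjective y
    refine ⟨a, fun j => ?_⟩
    have := congrFun hy j
    rwa [Ideal.quotientInfToPiQuotient_mk'] at this
  choose e he using hex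
  choose μ hμanti hμnm using fun i : MaximalSpectrum R => hfiber i.asIdeal i.2
  set lm : S := ∑ i, e i • μ i with hlmdef
  have hanti : θ lm = -lm := by
    rw [hlmdef, map_sum, ← Finset.sum_neg_distrib]
    exact Finset.sum_congr rfl fun i _ => by rw [map_smul, hμanti i, smul_neg]
  have hnot : ∀ m : Ideal R, m.IsMaximal → lm ∉ m • (⊤ : Submodule R S) := by
    intro m hm hmem
    have hdiff : lm - μ ⟨m, hm⟩ ∈ m • (⊤ : Submodule R S) := by
      have heq : lm - μ ⟨m, hm⟩ =
          ∑ i, (e i - if i = (⟨m, hm⟩ : MaximalSpectrum R) then 1 else 0) • μ i := by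
        rw [hlmdef]
        rw [show (∑ i, (e i - if i = (⟨m, hm⟩ : MaximalSpectrum R) then 1 else 0) • μ i)
            = ∑ i, (e i • μ i -
              (if i = (⟨m, hm⟩ : MaximalSpectrum R) then (1:R) else 0) • μ i) from
          Finset.sum_congr rfl fun i _ => by rw [sub_smul]]
        rw [Finset.sum_sub_distrib]
        congr 1
        rw [show (∑ i, (if i = (⟨m, hm⟩ : MaximalSpectrum R) then (1:R) else 0) • μ i)
            = ∑ i, (if i = (⟨m, hm⟩ : MaximalSpectrum R) then μ i else 0) from
          Finset.sum_congr rfl fun i _ => by split <;> simp]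
        simp
      rw [heq]
      refine Submodule.sum_mem _ fun i _ => Submodule.smul_mem_smul ?_ trivial
      by_cases h : i = (⟨m, hm⟩ : MaximalSpectrum R)
      · rw [if_pos h]
        have h1 := he i i
        rw [if_pos rfl] at h1
        have h0 : Ideal.Quotient.mk i.asIdeal (e i - 1) = 0 := by
          rw [map_sub, h1, map_one, sub_self]
        have h3 := Ideal.Quotient.eq_zero_iff_mem.mp h0
        have h4 : i.asIdeal = m := by rw [h]
        rwa [h4] at h3
      · rw [if_neg h, sub_zero]
        have h1 := he i ⟨m, hm⟩
        rw [if_neg (fun hh => h hh.symm)] at h1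
        exact Ideal.Quotient.eq_zero_iff_mem.mp h1
    have hmu : μ ⟨m, hm⟩ ∈ m • (⊤ : Submodule R S) := by
      have h3 := Submodule.sub_mem _ hmem hdiff
      simpa using h3
    exact hμnm ⟨m, hm⟩ hmu
  -- lm * lm is a scalar
  have hsq : θ (lm * lm) = lm * lm := by rw [map_mul, hanti]; ring
  obtain ⟨r, hr⟩ := (hfix _).mp hsq
  -- r is a unit
  have hrunit : IsUnit r := by
    by_contra hnu
    obtain ⟨m, hm, hrm⟩ := exists_max_ideal_of_mem_nonunits (mem_nonunits_iff.mpr hnu)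
    haveI := hm
    letI : Field (R ⧸ m) := Ideal.Quotient.field m
    set x : (R ⧸ m) ⊗[R] S := (1 : R ⧸ m) ⊗ₜ[R] lm with hxdef
    have hx0 : x ≠ 0 := fun h => hnot m hm ((aux_tmul_zero_iff m lm).mp h)
    have hxx : x * x = 0 := by
      rw [hxdef, Algebra.TensorProduct.tmul_mul_tmul, mul_one, ← hr]
      refine (aux_tmul_zero_iff m _).mpr ?_
      rw [Algebra.algebraMap_eq_smul_one]
      exact Submodule.smul_mem_smul hrm trivial
    -- {1, x} is linearly independent
    have hli : LinearIndependent (R ⧸ m) ![(1 : (R ⧸ m) ⊗[R] S), x] := by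
      rw [LinearIndependent.pair_iff]
      intro s t hst
      have h1 : s • x = 0 := by
        have h2 := congrArg (fun z => z * x) hst
        simp only [add_mul, smul_mul_assoc, one_mul, zero_mul, hxx, smul_zero, add_zero] at h2
        exact h2
      have hs : s = 0 := by
        rcases smul_eq_zero.mp h1 with h | h
        · exact h
        · exact absurd h hx0
      refine ⟨hs, ?_⟩
      rw [hs, zero_smul, zero_add] at hst
      rcases smul_eq_zero.mp hst with h | h
      · exact h
      · exact absurd h hx0
    have hcard : Fintype.card (Fin 2) = Module.finrank (R ⧸ m) ((R ⧸ m) ⊗[R] S) := by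
      rw [hrank m hm]; simp
    set b := basisOfLinearIndependentOfCardEqFinrank hli hcard with hbdef
    have hb : ⇑b = ![(1 : (R ⧸ m) ⊗[R] S), x] :=
      coe_basisOfLinearIndependentOfCardEqFinrank _ _
    have hb0 : b 0 = 1 := by rw [hb]; rfl
    have hb1 : b 1 = x := by rw [hb]; rfl
    have hrepr0 : ∀ p q : R ⧸ m, b.repr (p • (1 : (R ⧸ m) ⊗[R] S) + q • x) 0 = p := by
      intro p q
      rw [← hb0, ← hb1, map_add, map_smul, map_smul, b.repr_self, b.repr_self]
      simp [Finsupp.single_apply]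
    have hdec : ∀ y : (R ⧸ m) ⊗[R] S,
        y = b.repr y 0 • (1 : (R ⧸ m) ⊗[R] S) + b.repr y 1 • x := by
      intro y
      conv_lhs => rw [← b.sum_repr y]
      rw [Fin.sum_univ_two, hb0, hb1]
    have hmul : ∀ y z : (R ⧸ m) ⊗[R] S,
        b.repr (y * z) 0 = b.repr y 0 * b.repr z 0 := by
      intro y z
      have hyz : y * z = (b.repr y 0 * b.repr z 0) • (1 : (R ⧸ m) ⊗[R] S) +
          (b.repr y 0 * b.repr z 1 + b.repr y 1 * b.repr z 0) • x := by
        conv_lhs => rw [hdec y, hdec z]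
        simp only [add_mul, mul_add, smul_mul_assoc, mul_smul_comm, hxx, smul_zero,
          mul_one, one_mul, smul_smul, add_zero]
        module
      rw [hyz, hrepr0]
    -- the projection algebra hom
    set ψ : ((R ⧸ m) ⊗[R] S) →ₐ[R ⧸ m] ((R ⧸ m) ⊗[R] S) :=
      { toFun := fun y => algebraMap (R ⧸ m) ((R ⧸ m) ⊗[R] S) (b.repr y 0)
        map_one' := by
          have h10 : b.repr (1 : (R ⧸ m) ⊗[R] S) 0 = 1 := by
            have := hrepr0 1 0
            simpa using this
          rw [h10, map_one]
        map_mul' := fun y z => by rw [hmul, map_mul]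
        map_zero' := by
          have hz : b.repr (0 : (R ⧸ m) ⊗[R] S) 0 = 0 := by simp
          rw [hz, map_zero]
        map_add' := fun y z => by rw [map_add, Finsupp.add_apply, map_add]
        commutes' := fun a => by
          have h4 : algebraMap (R ⧸ m) ((R ⧸ m) ⊗[R] S) a =
              a • (1 : (R ⧸ m) ⊗[R] S) + (0 : R ⧸ m) • x := by
            rw [Algebra.algebraMap_eq_smul_one, zero_smul, add_zero]
          rw [h4, hrepr0]
          rw [← h4] } with hψdef
    set I : Ideal ((R ⧸ m) ⊗[R] S) := Ideal.span {x} with hIdef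
    have hI : I ^ 2 = ⊥ := by
      rw [hIdef, pow_two, Ideal.span_singleton_mul_span_singleton]
      exact Ideal.span_singleton_eq_bot.mpr hxx
    have heq : (Ideal.Quotient.mkₐ (R ⧸ m) I).comp (AlgHom.id (R ⧸ m) _) =
        (Ideal.Quotient.mkₐ (R ⧸ m) I).comp ψ := by
      apply AlgHom.ext
      intro y
      simp only [AlgHom.comp_apply, AlgHom.id_apply, Ideal.Quotient.mkₐ_eq_mk]
      rw [Ideal.Quotient.eq]
      have h5 : y - algebraMap (R ⧸ m) ((R ⧸ m) ⊗[R] S) (b.repr y 0) =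
          b.repr y 1 • x := by
        have hy := hdec y
        set p := b.repr y 0 with hp
        set q := b.repr y 1 with hq
        rw [Algebra.algebraMap_eq_smul_one, hy, add_sub_cancel_left]
      show y - algebraMap (R ⧸ m) ((R ⧸ m) ⊗[R] S) (b.repr y 0) ∈ I
      rw [h5]
      exact Submodule.smul_of_tower_mem I _ (Ideal.subset_span (Set.mem_singleton x))
    have hidψ : AlgHom.id (R ⧸ m) ((R ⧸ m) ⊗[R] S) = ψ :=
      Algebra.FormallyUnramified.comp_injective I hI heq
    have hxval : x = algebraMap (R ⧸ m) ((R ⧸ m) ⊗[R] S) (b.repr x 0) :=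
      DFunLike.congr_fun hidψ x
    have hbx : b.repr x 0 = 0 := by
      rw [← hb1, b.repr_self]
      simp [Finsupp.single_apply]
    rw [hbx, map_zero] at hxval
    exact hx0 hxval
  -- injectivity of scalars
  have hinj : ∀ a : R, algebraMap R S a = 0 → a = 0 := fun a ha => aux_inj hrank ha
  -- linear independence of {1, lm}
  have hli : LinearIndependent R ![(1 : S), lm] := by
    rw [LinearIndependent.pair_iff]
    intro s t hst
    have hθ : s • (1 : S) + t • (-lm) = 0 := by
      have h6 := congrArg θ hst
      rw [map_add, map_smul, map_smul, map_one, hanti, map_zero] at h6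
      exact h6
    have h2s : (2 * s) • (1 : S) = 0 := by
      have h7 : (s • (1 : S) + t • lm) + (s • (1 : S) + t • (-lm)) = 0 := by
        rw [hst, hθ, add_zero]
      rw [two_mul, add_smul]
      calc s • (1 : S) + s • (1 : S)
          = (s • (1 : S) + t • lm) + (s • (1 : S) + t • (-lm)) := by
            rw [smul_neg]; ring_nf
      _ = 0 := h7
    have hs : s = 0 := by
      have h8 : (2 : R) * s = 0 := by
        apply hinj
        rw [Algebra.algebraMap_eq_smul_one]
        exact h2s
      calc s = (2 * half) * s := by rw [hhalf, one_mul]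
      _ = half * (2 * s) := by ring
      _ = 0 := by rw [h8, mul_zero]
    refine ⟨hs, ?_⟩
    rw [hs, zero_smul, zero_add] at hst
    have htr : t * r = 0 := by
      apply hinj
      rw [map_mul, hr, ← mul_assoc]
      have h9 : algebraMap R S t * lm = t • lm := (Algebra.smul_def t lm).symm
      rw [h9, hst, zero_mul]
    obtain ⟨w, hw⟩ := hrunit.exists_right_inv
    calc t = t * (r * w) := by rw [hw, mul_one]
    _ = (t * r) * w := by ring
    _ = 0 := by rw [htr, zero_mul]
  -- spanning
  have hspan : ⊤ ≤ Submodule.span R (Set.range ![(1 : S), lm]) := by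
    intro s _
    obtain ⟨a, μ, hμ, rfl⟩ := hdecomp s
    have h1mem : (1 : S) ∈ Set.range ![(1 : S), lm] := ⟨0, rfl⟩
    have hlmmem : lm ∈ Set.range ![(1 : S), lm] := ⟨1, rfl⟩
    apply Submodule.add_mem
    · rw [Algebra.algebraMap_eq_smul_one]
      exact Submodule.smul_mem _ _ (Submodule.subset_span h1mem)
    · have hinvar : θ (μ * lm) = μ * lm := by rw [map_mul, hμ, hanti]; ring
      obtain ⟨c, hc⟩ := (hfix _).mp hinvar
      obtain ⟨w, hw⟩ := hrunit.exists_right_inv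
      have hμeq : μ = (c * w) • lm := by
        have h1 : r • μ = c • lm := by
          rw [Algebra.smul_def, Algebra.smul_def]
          calc algebraMap R S r * μ = (lm * lm) * μ := by rw [hr]
          _ = (μ * lm) * lm := by ring
          _ = algebraMap R S c * lm := by rw [hc]
        calc μ = (r * w) • μ := by rw [hw, one_smul]
        _ = w • (r • μ) := by rw [mul_comm, mul_smul]
        _ = w • (c • lm) := by rw [h1]
        _ = (c * w) • lm := by rw [smul_smul, mul_comm]
      rw [hμeq]
      exact Submodule.smul_mem _ _ (Submodule.subset_span hlmmem)
  refine ⟨lm, ⟨r, hrunit, hr.symm⟩, hanti, Module.Basis.mk hli hspan, ?_, ?_⟩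
  · rw [Module.Basis.mk_apply]; rfl
  · rw [Module.Basis.mk_apply]; rfl
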